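/- Let μ : {compact subintervals of [a,b]} → ℝ be interval-additive with strict derivative g with respect to length on [a,b], and assume there exists an interval I₀ with length ν(I₀) > 0. If g is constant equal to c on [a,b], then μ(I) = c·(length of I) for every compact subinterval I of [a,b]. -/

import Mathlib

/-- `μ c d` is the value of the set function on the interval `[c,d]`;
interval-additivity: `μ [c,e] = μ [c,d] + μ [d,e]` for `c ≤ d ≤ e` in `[a,b]`. -/
def IntervalAdditive (a b : ℝ) (μ : ℝ → ℝ → ℝ) : Prop :=
  ∀ c d e : ℝ, a ≤ c → c ≤ d → d ≤ e → e ≤ b → μ c e = μ c d + μ d e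

/-- `g` is the Peano strict derivative of the interval function `μ` with respect
to length on `[a,b]`: for every `x ∈ [a,b]` and `ε > 0` there is `δ > 0` with
`|μ [c,d] / (d - c) - g x| < ε` for every nondegenerate interval
`[c,d] ⊆ (x - δ, x + δ) ∩ [a,b]`. -/
def PeanoStrictDeriv (a b : ℝ) (μ : ℝ → ℝ → ℝ) (g : ℝ → ℝ) : Prop :=
  ∀ x ∈ Set.Icc a b, ∀ ε > 0, ∃ δ > 0, ∀ c d : ℝ, a ≤ c → c < d → d ≤ b →
    Set.Icc c d ⊆ Set.Ioo (x - δ) (x + δ) → |μ c d / (d - c) - g x| < ε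

/-- Peano's corollary (1887, p. 171): if the strict derivative of `μ` with
respect to length is the constant `c` on `[a,b]` (with `a < b`, so that some
interval has positive length), then `μ I = c · |I|` for every compact
subinterval `I` of `[a,b]`. -/
theorem peano_constant_strict_derivative (a b : ℝ) (hab : a < b)
    (μ : ℝ → ℝ → ℝ) (hμ : IntervalAdditive a b μ) (c : ℝ)
    (h : PeanoStrictDeriv a b μ (fun _ => c)) :
    ∀ c' d' : ℝ, a ≤ c' → c' ≤ d' → d' ≤ b → μ c' d' = c * (d' - c') := by
  intro c' d' hac hcd hdb
  set F : ℝ → ℝ := fun t => μ a t - c * t with hF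
  have hderiv : ∀ x ∈ Set.Icc a b, HasDerivWithinAt F 0 (Set.Icc a b) x := by
    intro x hx
    have hF' : HasDerivWithinAt (fun t => μ a t) c (Set.Icc a b) x := by
      rw [hasDerivWithinAt_iff_tendsto_slope]
      rw [Metric.tendsto_nhdsWithin_nhds]
      intro ε hε
      obtain ⟨δ, hδ, hδ'⟩ := h x hx ε hε
      refine ⟨δ, hδ, ?_⟩
      intro t ht hdist
      obtain ⟨⟨hat, htb⟩, htx⟩ := ht
      rw [Real.dist_eq] at hdist ⊢
      rcases lt_or_gt_of_ne (htx : t ≠ x) with hlt | hgt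
      · -- t < x
        have hadd := hμ a t x le_rfl hat hlt.le hx.2
        have hne1 : t - x ≠ 0 := sub_ne_zero.mpr htx
        have hne2 : x - t ≠ 0 := sub_ne_zero.mpr (Ne.symm htx)
        have hslope : slope (fun t => μ a t) x t = μ t x / (x - t) := by
          rw [slope_def_field, hadd]
          field_simp
          ring
        have := hδ' t x hat hlt hx.2 ?_
        · simpa [hslope] using this
        · intro y hy
          constructor
          · have : |t - x| < δ := hdist
            have := abs_lt.mp this
            linarith [hy.1]
          · linarith [hy.2, hδ]
      · -- x < t
        have hadd := hμ a x t le_rfl hx.1 hgt.le htb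
        have hslope : slope (fun t => μ a t) x t = μ x t / (t - x) := by
          rw [slope_def_field, hadd]
          ring_nf
        have := hδ' x t hx.1 hgt htb ?_
        · simpa [hslope] using this
        · intro y hy
          constructor
          · linarith [hy.1, hδ]
          · have : |t - x| < δ := hdist
            have := abs_lt.mp this
            linarith [hy.2]
    have hlin : HasDerivWithinAt (fun t : ℝ => c * t) c (Set.Icc a b) x := by
      simpa using ((hasDerivWithinAt_id x (Set.Icc a b)).const_mul c)
    have h2 := hF'.sub hlin
    rw [sub_self] at h2
    exact h2
  have key := Convex.norm_image_sub_le_of_norm_hasDerivWithin_le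
    (C := 0) (f' := fun _ => (0 : ℝ)) (fun x hx => hderiv x hx)
    (fun x _ => by simp) (convex_Icc a b) (⟨hac, hcd.trans hdb⟩ : c' ∈ Set.Icc a b)
    (⟨hac.trans hcd, hdb⟩ : d' ∈ Set.Icc a b)
  simp only [zero_mul, norm_le_zero_iff] at key
  have hFeq : F d' = F c' := by
    have : F d' - F c' = 0 := by simpa using key
    linarith
  have hadd := hμ a c' d' le_rfl hac hcd hdb
  simp only [hF] at hFeq
  linarith [hFeq]
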